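/- Step-1 monotonicity of the co-clustering iterations: let (C_X^{(i)}, C_W^{(i)}), i = 0, 1, 2, …, be a sequence of clustering pairs such that for each i, (a) for every x ∈ X, D(p(·|x) ‖ p̂^{(i)}(·|C_X^{(i+1)} x)) ≤ D(p(·|x) ‖ p̂^{(i)}(·|C_X^{(i)} x)), where p̂^{(i)} is computed from (C_X^{(i)}, C_W^{(i)}), and (b) for every w ∈ W, D(p(·|w) ‖ p̃^{(i)}(·|C_W^{(i+1)} w)) ≤ D(p(·|w) ‖ p̃^{(i)}(·|C_W^{(i)} w)), where p̃^{(i)} is computed from (C_X^{(i+1)}, C_W^{(i)}). Then for every i, ℓ_A(C_X^{(i+1)}, C_W^{(i+1)}) ≤ ℓ_A(C_X^{(i)}, C_W^{(i)}), i.e., the updates monotonically decrease the objective and the objective values converge. -/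

import Mathlib

open scoped BigOperators

noncomputable section

/-- Kullback–Leibler divergence `D(g‖h)` between nonnegative functions on a finite type,
`D(g‖h) = ∑_{t : g t > 0} g t * log (g t / h t)`, with the convention `D(g‖h) = ⊤`
whenever `g t > 0 = h t` for some `t`. -/
def KLdiv {T : Type*} [Fintype T] (g h : T → ℝ) : EReal :=
  if ∃ t, 0 < g t ∧ h t = 0 then ⊤
  else ((∑ t ∈ Finset.univ.filter (fun t => 0 < g t),
      g t * Real.log (g t / h t) : ℝ) : EReal)

/-- Row marginal `p₁(x) = ∑_w p(x,w)`. -/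
def marg₁ {A B : Type*} [Fintype B] (p : A × B → ℝ) (x : A) : ℝ := ∑ w, p (x, w)

/-- Column marginal `p₂(w) = ∑_x p(x,w)`. -/
def marg₂ {A B : Type*} [Fintype A] (p : A × B → ℝ) (w : B) : ℝ := ∑ x, p (x, w)

/-- Co-clustered distribution `p*(x*,w*) = ∑_{x : C_X x = x*} ∑_{w : C_W w = w*} p(x,w)`. -/
def coclust {A B As Bs : Type*} [Fintype A] [Fintype B] [DecidableEq As] [DecidableEq Bs]
    (p : A × B → ℝ) (CX : A → As) (CW : B → Bs) : As × Bs → ℝ :=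
  fun c => ∑ x ∈ Finset.univ.filter (fun x => CX x = c.1),
             ∑ w ∈ Finset.univ.filter (fun w => CW w = c.2), p (x, w)

/-- Approximating distribution
`p̂(x,w) = p*(C_X x, C_W w) · p₁(x) · p₂(w) / (p₁*(C_X x) · p₂*(C_W w))`. -/
def approx {A B As Bs : Type*} [Fintype A] [Fintype B] [Fintype As] [Fintype Bs]
    [DecidableEq As] [DecidableEq Bs]
    (p : A × B → ℝ) (CX : A → As) (CW : B → Bs) : A × B → ℝ :=
  fun c =>
    coclust p CX CW (CX c.1, CW c.2) * marg₁ p c.1 * marg₂ p c.2 /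
      (marg₁ (coclust p CX CW) (CX c.1) * marg₂ (coclust p CX CW) (CW c.2))

/-- Conditional distribution `p(w|x) = p(x,w)/p₁(x)` on `B`. -/
def condRow {A B : Type*} [Fintype B] (p : A × B → ℝ) (x : A) : B → ℝ :=
  fun w => p (x, w) / marg₁ p x

/-- Conditional distribution `p(x|w) = p(x,w)/p₂(w)` on `A`. -/
def condCol {A B : Type*} [Fintype A] (p : A × B → ℝ) (w : B) : A → ℝ :=
  fun x => p (x, w) / marg₂ p w

/-- Conditional approximating distribution
`p̂(w|x*) = p*(x*, C_W w) · p₂(w) / (p₁*(x*) · p₂*(C_W w))` on `B`. -/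
def approxCondRow {A B As Bs : Type*} [Fintype A] [Fintype B] [Fintype As] [Fintype Bs]
    [DecidableEq As] [DecidableEq Bs]
    (p : A × B → ℝ) (CX : A → As) (CW : B → Bs) (xs : As) : B → ℝ :=
  fun w =>
    coclust p CX CW (xs, CW w) * marg₂ p w /
      (marg₁ (coclust p CX CW) xs * marg₂ (coclust p CX CW) (CW w))

/-- Conditional approximating distribution
`p̂(x|w*) = p*(C_X x, w*) · p₁(x) / (p₂*(w*) · p₁*(C_X x))` on `A`. -/
def approxCondCol {A B As Bs : Type*} [Fintype A] [Fintype B] [Fintype As] [Fintype Bs]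
    [DecidableEq As] [DecidableEq Bs]
    (p : A × B → ℝ) (CX : A → As) (CW : B → Bs) (ws : Bs) : A → ℝ :=
  fun x =>
    coclust p CX CW (CX x, ws) * marg₁ p x /
      (marg₂ (coclust p CX CW) ws * marg₁ (coclust p CX CW) (CX x))

/-- Mutual information `I(p) = ∑_{x,w} p(x,w) · log (p(x,w)/(p₁(x)·p₂(w)))`
(summing over all pairs; used for the strictly positive original distribution). -/
def mutualInfoFull {A B : Type*} [Fintype A] [Fintype B] (p : A × B → ℝ) : ℝ :=
  ∑ x, ∑ w, p (x, w) * Real.log (p (x, w) / (marg₁ p x * marg₂ p w))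

/-- Mutual information `I(p*) = ∑_{(x*,w*) : p*(x*,w*) > 0} p*(x*,w*) ·
log (p*(x*,w*)/(p₁*(x*)·p₂*(w*)))` (summing only over positive entries). -/
def mutualInfoPos {A B : Type*} [Fintype A] [Fintype B] (p : A × B → ℝ) : ℝ :=
  ∑ c ∈ Finset.univ.filter (fun c : A × B => 0 < p c),
    p c * Real.log (p c / (marg₁ p c.1 * marg₂ p c.2))

/-- The co-clustering objective `ℓ_A(C_X, C_W) = I(p) − I(p*)`. -/
def lossA {A B As Bs : Type*} [Fintype A] [Fintype B] [Fintype As] [Fintype Bs]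
    [DecidableEq As] [DecidableEq Bs]
    (p : A × B → ℝ) (CX : A → As) (CW : B → Bs) : ℝ :=
  mutualInfoFull p - mutualInfoPos (coclust p CX CW)

/-- The elastic coupled co-clustering objective
`ℓ_T(C_Y, C_Z) = I(q) − I(q*) + α·D(q₁*‖π) + β·D(q₂*‖ρ)`. -/
def lossT {A B As Bs : Type*} [Fintype A] [Fintype B] [Fintype As] [Fintype Bs]
    [DecidableEq As] [DecidableEq Bs]
    (q : A × B → ℝ) (CY : A → As) (CZ : B → Bs) (π : As → ℝ) (ρ : Bs → ℝ)
    (α β : ℝ) : EReal :=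
  ((mutualInfoFull q - mutualInfoPos (coclust q CY CZ) : ℝ) : EReal)
    + (α : EReal) * KLdiv (marg₁ (coclust q CY CZ)) π
    + (β : EReal) * KLdiv (marg₂ (coclust q CY CZ)) ρ

end

set_option linter.unusedSectionVars false
set_option linter.unusedVariables false

section AuxLemmas

open Finset

variable {X W Xs Ws : Type*} [Fintype X] [Fintype W] [Fintype Xs] [Fintype Ws]
  [DecidableEq Xs] [DecidableEq Ws]

lemma marg₁_pos [Nonempty W] (p : X × W → ℝ) (hpos : ∀ c, 0 < p c) (x : X) :
    0 < marg₁ p x :=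
  Finset.sum_pos (fun _ _ => hpos _) Finset.univ_nonempty

lemma marg₂_pos [Nonempty X] (p : X × W → ℝ) (hpos : ∀ c, 0 < p c) (w : W) :
    0 < marg₂ p w :=
  Finset.sum_pos (fun _ _ => hpos _) Finset.univ_nonempty

lemma coclust_nonneg (p : X × W → ℝ) (hpos : ∀ c, 0 < p c) (CX : X → Xs) (CW : W → Ws)
    (c : Xs × Ws) : 0 ≤ coclust p CX CW c :=
  Finset.sum_nonneg fun _ _ => Finset.sum_nonneg fun _ _ => (hpos _).le

lemma coclust_apply_pos (p : X × W → ℝ) (hpos : ∀ c, 0 < p c) (CX : X → Xs) (CW : W → Ws)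
    (x : X) (w : W) : 0 < coclust p CX CW (CX x, CW w) := by
  refine Finset.sum_pos' (fun _ _ => Finset.sum_nonneg fun _ _ => (hpos _).le)
    ⟨x, Finset.mem_filter.2 ⟨Finset.mem_univ _, rfl⟩, ?_⟩
  exact Finset.sum_pos (fun _ _ => hpos _)
    ⟨w, Finset.mem_filter.2 ⟨Finset.mem_univ _, rfl⟩⟩

lemma marg₁_coclust_pos (p : X × W → ℝ) (hpos : ∀ c, 0 < p c) (CX : X → Xs) (CW : W → Ws)
    {xs : Xs} {ws : Ws} (h : 0 < coclust p CX CW (xs, ws)) :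
    0 < marg₁ (coclust p CX CW) xs :=
  Finset.sum_pos' (fun w' _ => coclust_nonneg p hpos CX CW _)
    ⟨ws, Finset.mem_univ _, h⟩

lemma marg₂_coclust_pos (p : X × W → ℝ) (hpos : ∀ c, 0 < p c) (CX : X → Xs) (CW : W → Ws)
    {xs : Xs} {ws : Ws} (h : 0 < coclust p CX CW (xs, ws)) :
    0 < marg₂ (coclust p CX CW) ws :=
  Finset.sum_pos' (fun x' _ => coclust_nonneg p hpos CX CW _)
    ⟨xs, Finset.mem_univ _, h⟩

lemma marg₁_coclust (p : X × W → ℝ) (CX : X → Xs) (CW : W → Ws) (xs : Xs) :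
    marg₁ (coclust p CX CW) xs
      = ∑ x ∈ Finset.univ.filter (fun x => CX x = xs), marg₁ p x := by
  show ∑ ws' : Ws, ∑ x ∈ Finset.univ.filter (fun x => CX x = xs),
      ∑ w ∈ Finset.univ.filter (fun w => CW w = ws'), p (x, w) = _
  rw [Finset.sum_comm]
  refine Finset.sum_congr rfl fun x _ => ?_
  exact Finset.sum_fiberwise _ _ _

lemma marg₂_coclust (p : X × W → ℝ) (CX : X → Xs) (CW : W → Ws) (ws : Ws) :
    marg₂ (coclust p CX CW) ws
      = ∑ w ∈ Finset.univ.filter (fun w => CW w = ws), marg₂ p w := by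
  show ∑ xs : Xs, ∑ x ∈ Finset.univ.filter (fun x => CX x = xs),
      ∑ w ∈ Finset.univ.filter (fun w => CW w = ws), p (x, w) = _
  rw [Finset.sum_fiberwise]
  exact Finset.sum_comm

lemma sum_coclust_mul (p : X × W → ℝ) (CX : X → Xs) (CW : W → Ws) (f : Xs × Ws → ℝ) :
    ∑ c : Xs × Ws, coclust p CX CW c * f c = ∑ x, ∑ w, p (x, w) * f (CX x, CW w) := by
  rw [Fintype.sum_prod_type]
  have key : ∀ xs ws, coclust p CX CW (xs, ws) * f (xs, ws)
      = ∑ x ∈ Finset.univ.filter (fun x => CX x = xs),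
          ∑ w ∈ Finset.univ.filter (fun w => CW w = ws), p (x, w) * f (CX x, CW w) := by
    intro xs ws
    rw [coclust, Finset.sum_mul]
    refine Finset.sum_congr rfl fun x hx => ?_
    rw [Finset.sum_mul]
    refine Finset.sum_congr rfl fun w hw => ?_
    rw [(Finset.mem_filter.1 hx).2, (Finset.mem_filter.1 hw).2]
  calc ∑ xs, ∑ ws, coclust p CX CW (xs, ws) * f (xs, ws)
      = ∑ xs, ∑ x ∈ Finset.univ.filter (fun x => CX x = xs),
          ∑ ws, ∑ w ∈ Finset.univ.filter (fun w => CW w = ws), p (x, w) * f (CX x, CW w) := by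
        refine Finset.sum_congr rfl fun xs _ => ?_
        rw [← Finset.sum_comm]
        exact Finset.sum_congr rfl fun ws _ => key xs ws
    _ = ∑ xs, ∑ x ∈ Finset.univ.filter (fun x => CX x = xs),
          ∑ w, p (x, w) * f (CX x, CW w) := by
        refine Finset.sum_congr rfl fun xs _ => Finset.sum_congr rfl fun x _ => ?_
        exact Finset.sum_fiberwise _ _ _
    _ = ∑ x, ∑ w, p (x, w) * f (CX x, CW w) := Finset.sum_fiberwise _ _ _

lemma mutualInfoPos_eq {A B : Type*} [Fintype A] [Fintype B] (q : A × B → ℝ)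
    (hq : ∀ c, 0 ≤ q c) :
    mutualInfoPos q = ∑ c, q c * Real.log (q c / (marg₁ q c.1 * marg₂ q c.2)) := by
  rw [mutualInfoPos]
  refine Finset.sum_subset (Finset.filter_subset _ _) fun c _ hc => ?_
  have : q c = 0 := le_antisymm (by simpa [hq c] using (Finset.mem_filter.not.1 hc)) (hq c)
  simp [this]

lemma master [Nonempty X] [Nonempty W] (p : X × W → ℝ) (hpos : ∀ c, 0 < p c)
    (CX C' : X → Xs) (CW : W → Ws)
    (hC' : ∀ x w, 0 < coclust p CX CW (C' x, CW w)) :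
    ∑ x, ∑ w, p (x, w) *
        Real.log (p (x, w) / (marg₁ p x * approxCondRow p CX CW (C' x) w))
      = lossA p C' CW
        + ∑ c : Xs × Ws, coclust p C' CW c *
            (Real.log (coclust p C' CW c) + Real.log (marg₁ (coclust p CX CW) c.1)
              - Real.log (marg₁ (coclust p C' CW) c.1)
              - Real.log (coclust p CX CW c)) := by
  have hq : ∀ x w, 0 < coclust p C' CW (C' x, CW w) := fun x w =>
    coclust_apply_pos p hpos C' CW x w
  have hMI : mutualInfoPos (coclust p C' CW)
      = ∑ x, ∑ w, p (x, w) *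
          (fun c : Xs × Ws => Real.log (coclust p C' CW c /
            (marg₁ (coclust p C' CW) c.1 * marg₂ (coclust p C' CW) c.2))) (C' x, CW w) :=
    (mutualInfoPos_eq _ (coclust_nonneg p hpos C' CW)).trans
      (sum_coclust_mul p C' CW _)
  have hG : (∑ c : Xs × Ws, coclust p C' CW c *
        (Real.log (coclust p C' CW c) + Real.log (marg₁ (coclust p CX CW) c.1)
          - Real.log (marg₁ (coclust p C' CW) c.1) - Real.log (coclust p CX CW c)))
      = ∑ x, ∑ w, p (x, w) *
          (fun c : Xs × Ws => Real.log (coclust p C' CW c)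
            + Real.log (marg₁ (coclust p CX CW) c.1)
            - Real.log (marg₁ (coclust p C' CW) c.1)
            - Real.log (coclust p CX CW c)) (C' x, CW w) :=
    sum_coclust_mul p C' CW _
  rw [lossA, mutualInfoFull, hMI, hG, ← Finset.sum_sub_distrib, ← Finset.sum_add_distrib]
  refine Finset.sum_congr rfl fun x _ => ?_
  rw [← Finset.sum_sub_distrib, ← Finset.sum_add_distrib]
  refine Finset.sum_congr rfl fun w _ => ?_
  show p (x, w) * Real.log (p (x, w) / (marg₁ p x *
      (coclust p CX CW (C' x, CW w) * marg₂ p w /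
        (marg₁ (coclust p CX CW) (C' x) * marg₂ (coclust p CX CW) (CW w)))))
    = p (x, w) * Real.log (p (x, w) / (marg₁ p x * marg₂ p w))
      - p (x, w) * Real.log (coclust p C' CW (C' x, CW w) /
          (marg₁ (coclust p C' CW) (C' x) * marg₂ (coclust p C' CW) (CW w)))
      + p (x, w) * (Real.log (coclust p C' CW (C' x, CW w))
          + Real.log (marg₁ (coclust p CX CW) (C' x))
          - Real.log (marg₁ (coclust p C' CW) (C' x))
          - Real.log (coclust p CX CW (C' x, CW w)))
  have hp := hpos (x, w)
  have hp1 := marg₁_pos p hpos x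
  have hp2 := marg₂_pos p hpos w
  have hr := hC' x w
  have hr1 := marg₁_coclust_pos p hpos CX CW (hC' x w)
  have hr2 := marg₂_coclust_pos p hpos CX CW (hC' x w)
  have hqv := hq x w
  have hq1 := marg₁_coclust_pos p hpos C' CW hqv
  have hq2 := marg₂_coclust_pos p hpos C' CW hqv
  have hq2r2 : marg₂ (coclust p C' CW) (CW w) = marg₂ (coclust p CX CW) (CW w) := by
    rw [marg₂_coclust, marg₂_coclust]
  have hQ : 0 < coclust p CX CW (C' x, CW w) * marg₂ p w /
      (marg₁ (coclust p CX CW) (C' x) * marg₂ (coclust p CX CW) (CW w)) :=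
    div_pos (mul_pos hr hp2) (mul_pos hr1 hr2)
  rw [Real.log_div hp.ne' (mul_pos hp1 hQ).ne', Real.log_mul hp1.ne' hQ.ne',
    Real.log_div (mul_pos hr hp2).ne' (mul_pos hr1 hr2).ne',
    Real.log_mul hr.ne' hp2.ne', Real.log_mul hr1.ne' hr2.ne',
    Real.log_div hp.ne' (mul_pos hp1 hp2).ne', Real.log_mul hp1.ne' hp2.ne',
    Real.log_div hqv.ne' (mul_pos hq1 hq2).ne', Real.log_mul hq1.ne' hq2.ne',
    hq2r2]
  ring

lemma key_eq [Nonempty X] [Nonempty W] (p : X × W → ℝ) (hpos : ∀ c, 0 < p c)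
    (CX : X → Xs) (CW : W → Ws) :
    lossA p CX CW = ∑ x, ∑ w, p (x, w) *
        Real.log (p (x, w) / (marg₁ p x * approxCondRow p CX CW (CX x) w)) := by
  rw [master p hpos CX CX CW (fun x w => coclust_apply_pos p hpos CX CW x w)]
  rw [Finset.sum_eq_zero (fun c _ => by ring), add_zero]

lemma gibbs_nonneg [Nonempty X] [Nonempty W] (p : X × W → ℝ) (hpos : ∀ c, 0 < p c)
    (CX C' : X → Xs) (CW : W → Ws)
    (hC' : ∀ x w, 0 < coclust p CX CW (C' x, CW w)) :
    0 ≤ ∑ c : Xs × Ws, coclust p C' CW c *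
        (Real.log (coclust p C' CW c) + Real.log (marg₁ (coclust p CX CW) c.1)
          - Real.log (marg₁ (coclust p C' CW) c.1)
          - Real.log (coclust p CX CW c)) := by
  set q := coclust p C' CW with hqdef
  set r := coclust p CX CW with hrdef
  have hqnn : ∀ c, 0 ≤ q c := coclust_nonneg p hpos C' CW
  have hrnn : ∀ c, 0 ≤ r c := coclust_nonneg p hpos CX CW
  rw [Fintype.sum_prod_type]
  refine Finset.sum_nonneg fun xs _ => ?_
  show (0:ℝ) ≤ ∑ ws, q (xs, ws) *
      (Real.log (q (xs, ws)) + Real.log (marg₁ r xs)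
        - Real.log (marg₁ q xs) - Real.log (r (xs, ws)))
  by_cases hx : marg₁ q xs = 0
  · have hz : ∀ ws, q (xs, ws) = 0 := fun ws =>
      (Finset.sum_eq_zero_iff_of_nonneg (fun ws _ => hqnn (xs, ws))).1 hx ws
        (Finset.mem_univ _)
    refine Finset.sum_nonneg fun ws _ => ?_
    rw [hz ws, zero_mul]
  · have hq1pos : 0 < marg₁ q xs :=
      lt_of_le_of_ne (Finset.sum_nonneg fun ws _ => hqnn (xs, ws)) (Ne.symm hx)
    obtain ⟨x₀, hx₀⟩ : ∃ x₀, C' x₀ = xs := by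
      by_contra hno
      push_neg at hno
      refine hx ?_
      rw [hqdef, marg₁_coclust, Finset.filter_false_of_mem (fun x _ => hno x),
        Finset.sum_empty]
    have hr1pos : 0 < marg₁ r xs := by
      rw [← hx₀]
      exact marg₁_coclust_pos p hpos CX CW (hC' x₀ (Classical.arbitrary W))
    have hbound : ∀ ws, q (xs, ws) - marg₁ q xs * r (xs, ws) / marg₁ r xs
        ≤ q (xs, ws) * (Real.log (q (xs, ws)) + Real.log (marg₁ r xs)
            - Real.log (marg₁ q xs) - Real.log (r (xs, ws))) := by
      intro ws
      rcases eq_or_lt_of_le (hqnn (xs, ws)) with hq0 | hqpos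
      · rw [← hq0, zero_mul, zero_sub]
        exact neg_nonpos.2 (div_nonneg (mul_nonneg hq1pos.le (hrnn _)) hr1pos.le)
      · obtain ⟨w₁, hw₁⟩ : ∃ w₁, CW w₁ = ws := by
          by_contra hno
          push_neg at hno
          refine hqpos.ne (Eq.symm ?_)
          show q (xs, ws) = 0
          rw [hqdef]
          show (∑ x ∈ Finset.univ.filter (fun x => C' x = xs),
            ∑ w ∈ Finset.univ.filter (fun w => CW w = ws), p (x, w)) = 0
          rw [Finset.filter_false_of_mem (fun w _ => hno w)]
          simp
        have hrpos : 0 < r (xs, ws) := by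
          rw [← hx₀, ← hw₁]
          exact hC' x₀ w₁
        have ht : 0 < marg₁ q xs * r (xs, ws) / (q (xs, ws) * marg₁ r xs) :=
          div_pos (mul_pos hq1pos hrpos) (mul_pos hqpos hr1pos)
        have hlog := Real.log_le_sub_one_of_pos ht
        rw [Real.log_div (mul_pos hq1pos hrpos).ne' (mul_pos hqpos hr1pos).ne',
          Real.log_mul hq1pos.ne' hrpos.ne', Real.log_mul hqpos.ne' hr1pos.ne']
          at hlog
        have hqt : q (xs, ws) * (marg₁ q xs * r (xs, ws) / (q (xs, ws) * marg₁ r xs))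
            = marg₁ q xs * r (xs, ws) / marg₁ r xs := by
          field_simp
        calc q (xs, ws) - marg₁ q xs * r (xs, ws) / marg₁ r xs
            = q (xs, ws) * (1 - marg₁ q xs * r (xs, ws) / (q (xs, ws) * marg₁ r xs)) := by
              rw [mul_sub, mul_one, hqt]
          _ ≤ q (xs, ws) * (Real.log (q (xs, ws)) + Real.log (marg₁ r xs)
                - Real.log (marg₁ q xs) - Real.log (r (xs, ws))) := by
              refine mul_le_mul_of_nonneg_left ?_ hqpos.le
              linarith
    have hsum0 : ∑ ws, (q (xs, ws) - marg₁ q xs * r (xs, ws) / marg₁ r xs) = 0 := by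
      rw [Finset.sum_sub_distrib]
      have e1 : ∑ ws, q (xs, ws) = marg₁ q xs := rfl
      have e2 : ∑ ws, marg₁ q xs * r (xs, ws) / marg₁ r xs = marg₁ q xs := by
        rw [← Finset.sum_div, ← Finset.mul_sum]
        have e3 : ∑ ws, r (xs, ws) = marg₁ r xs := rfl
        rw [e3, mul_div_assoc, div_self hr1pos.ne', mul_one]
      rw [e1, e2, sub_self]
    calc (0:ℝ) = ∑ ws, (q (xs, ws) - marg₁ q xs * r (xs, ws) / marg₁ r xs) :=
          hsum0.symm
      _ ≤ _ := Finset.sum_le_sum fun ws _ => hbound ws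

lemma key_ineq [Nonempty X] [Nonempty W] (p : X × W → ℝ) (hpos : ∀ c, 0 < p c)
    (CX C' : X → Xs) (CW : W → Ws)
    (hC' : ∀ x w, 0 < coclust p CX CW (C' x, CW w)) :
    lossA p C' CW ≤ ∑ x, ∑ w, p (x, w) *
        Real.log (p (x, w) / (marg₁ p x * approxCondRow p CX CW (C' x) w)) := by
  rw [master p hpos CX C' CW hC']
  exact le_add_of_nonneg_right (gibbs_nonneg p hpos CX C' CW hC')

lemma halfstep [Nonempty X] [Nonempty W] (p : X × W → ℝ) (hpos : ∀ c, 0 < p c)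
    (CX C' : X → Xs) (CW : W → Ws)
    (h : ∀ x, KLdiv (condRow p x) (approxCondRow p CX CW (C' x))
        ≤ KLdiv (condRow p x) (approxCondRow p CX CW (CX x))) :
    lossA p C' CW ≤ lossA p CX CW := by
  have hp1 := marg₁_pos p hpos
  have hp2 := marg₂_pos p hpos
  have hcpos : ∀ x t, 0 < condRow p x t := fun x t => div_pos (hpos _) (hp1 x)
  have hacrR : ∀ x w, 0 < approxCondRow p CX CW (CX x) w := fun x w =>
    div_pos (mul_pos (coclust_apply_pos p hpos CX CW x w) (hp2 w))
      (mul_pos (marg₁_coclust_pos p hpos CX CW (coclust_apply_pos p hpos CX CW x w))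
        (marg₂_coclust_pos p hpos CX CW (coclust_apply_pos p hpos CX CW x w)))
  have hRne : ∀ x, ¬∃ t, 0 < condRow p x t ∧ approxCondRow p CX CW (CX x) t = 0 := by
    intro x hex
    obtain ⟨t, -, ht⟩ := hex
    exact (hacrR x t).ne' ht
  have hLne : ∀ x, ¬∃ t, 0 < condRow p x t ∧ approxCondRow p CX CW (C' x) t = 0 := by
    intro x hex
    have hx := h x
    rw [KLdiv, if_pos hex, KLdiv, if_neg (hRne x)] at hx
    exact EReal.coe_ne_top _ (top_le_iff.1 hx)
  have hacrL : ∀ x w, 0 < approxCondRow p CX CW (C' x) w := by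
    intro x w
    have hnn : 0 ≤ approxCondRow p CX CW (C' x) w :=
      div_nonneg (mul_nonneg (coclust_nonneg p hpos CX CW _) (hp2 w).le)
        (mul_nonneg (Finset.sum_nonneg fun _ _ => coclust_nonneg p hpos CX CW _)
          (Finset.sum_nonneg fun _ _ => coclust_nonneg p hpos CX CW _))
    refine lt_of_le_of_ne hnn (Ne.symm fun heq => hLne x ⟨w, hcpos x w, heq⟩)
  have hC' : ∀ x w, 0 < coclust p CX CW (C' x, CW w) := by
    intro x w
    by_contra hle
    have h0 : coclust p CX CW (C' x, CW w) = 0 :=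
      le_antisymm (not_lt.1 hle) (coclust_nonneg p hpos CX CW _)
    have hz : approxCondRow p CX CW (C' x) w = 0 := by
      show coclust p CX CW (C' x, CW w) * marg₂ p w /
        (marg₁ (coclust p CX CW) (C' x) * marg₂ (coclust p CX CW) (CW w)) = 0
      rw [h0, zero_mul, zero_div]
    exact (hacrL x w).ne' hz
  have hfilt : ∀ x, Finset.univ.filter (fun t => 0 < condRow p x t) = Finset.univ :=
    fun x => Finset.filter_true_of_mem fun t _ => hcpos x t
  have hreal : ∀ x,
      ∑ w, condRow p x w * Real.log (condRow p x w / approxCondRow p CX CW (C' x) w)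
        ≤ ∑ w, condRow p x w *
            Real.log (condRow p x w / approxCondRow p CX CW (CX x) w) := by
    intro x
    have hx := h x
    rw [KLdiv, if_neg (hLne x), KLdiv, if_neg (hRne x), hfilt x] at hx
    exact_mod_cast hx
  have hx_identity : ∀ C'' : X → Xs,
      (∑ x, marg₁ p x * ∑ w, condRow p x w *
          Real.log (condRow p x w / approxCondRow p CX CW (C'' x) w))
        = ∑ x, ∑ w, p (x, w) *
            Real.log (p (x, w) / (marg₁ p x * approxCondRow p CX CW (C'' x) w)) := by
    intro C''
    refine Finset.sum_congr rfl fun x _ => ?_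
    rw [Finset.mul_sum]
    refine Finset.sum_congr rfl fun w _ => ?_
    show marg₁ p x * (p (x, w) / marg₁ p x *
        Real.log ((p (x, w) / marg₁ p x) / approxCondRow p CX CW (C'' x) w)) = _
    rw [div_div, ← mul_assoc, mul_comm (marg₁ p x) (p (x, w) / marg₁ p x),
      div_mul_cancel₀ _ (hp1 x).ne']
  calc lossA p C' CW
      ≤ ∑ x, ∑ w, p (x, w) *
          Real.log (p (x, w) / (marg₁ p x * approxCondRow p CX CW (C' x) w)) :=
        key_ineq p hpos CX C' CW hC'
    _ = ∑ x, marg₁ p x * ∑ w, condRow p x w *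
          Real.log (condRow p x w / approxCondRow p CX CW (C' x) w) :=
        (hx_identity C').symm
    _ ≤ ∑ x, marg₁ p x * ∑ w, condRow p x w *
          Real.log (condRow p x w / approxCondRow p CX CW (CX x) w) :=
        Finset.sum_le_sum fun x _ =>
          mul_le_mul_of_nonneg_left (hreal x) (hp1 x).le
    _ = ∑ x, ∑ w, p (x, w) *
          Real.log (p (x, w) / (marg₁ p x * approxCondRow p CX CW (CX x) w)) :=
        hx_identity CX
    _ = lossA p CX CW := (key_eq p hpos CX CW).symm

lemma condRow_swap (p : X × W → ℝ) (w : W) :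
    condRow (fun c : W × X => p (c.2, c.1)) w = condCol p w := rfl

lemma coclust_swap (p : X × W → ℝ) (CX : X → Xs) (CW : W → Ws) (xs : Xs) (ws : Ws) :
    coclust (fun c : W × X => p (c.2, c.1)) CW CX (ws, xs) = coclust p CX CW (xs, ws) := by
  show (∑ w ∈ Finset.univ.filter (fun w => CW w = ws),
      ∑ x ∈ Finset.univ.filter (fun x => CX x = xs), p (x, w)) = _
  exact Finset.sum_comm

lemma marg₁_coclust_swap (p : X × W → ℝ) (CX : X → Xs) (CW : W → Ws) (ws : Ws) :
    marg₁ (coclust (fun c : W × X => p (c.2, c.1)) CW CX) ws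
      = marg₂ (coclust p CX CW) ws := by
  show (∑ xs, coclust (fun c : W × X => p (c.2, c.1)) CW CX (ws, xs))
    = ∑ xs, coclust p CX CW (xs, ws)
  exact Finset.sum_congr rfl fun xs _ => coclust_swap p CX CW xs ws

lemma marg₂_coclust_swap (p : X × W → ℝ) (CX : X → Xs) (CW : W → Ws) (xs : Xs) :
    marg₂ (coclust (fun c : W × X => p (c.2, c.1)) CW CX) xs
      = marg₁ (coclust p CX CW) xs := by
  show (∑ ws, coclust (fun c : W × X => p (c.2, c.1)) CW CX (ws, xs))
    = ∑ ws, coclust p CX CW (xs, ws)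
  exact Finset.sum_congr rfl fun ws _ => coclust_swap p CX CW xs ws

lemma approxCondRow_swap (p : X × W → ℝ) (CX : X → Xs) (CW : W → Ws) (ws : Ws) :
    approxCondRow (fun c : W × X => p (c.2, c.1)) CW CX ws = approxCondCol p CX CW ws := by
  funext x
  show coclust (fun c : W × X => p (c.2, c.1)) CW CX (ws, CX x)
      * marg₂ (fun c : W × X => p (c.2, c.1)) x /
      (marg₁ (coclust (fun c : W × X => p (c.2, c.1)) CW CX) ws
        * marg₂ (coclust (fun c : W × X => p (c.2, c.1)) CW CX) (CX x))
    = coclust p CX CW (CX x, ws) * marg₁ p x /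
      (marg₂ (coclust p CX CW) ws * marg₁ (coclust p CX CW) (CX x))
  rw [coclust_swap p CX CW (CX x) ws, marg₁_coclust_swap p CX CW ws,
    marg₂_coclust_swap p CX CW (CX x)]
  rfl

lemma lossA_swap (p : X × W → ℝ) (hpos : ∀ c, 0 < p c) (CX : X → Xs) (CW : W → Ws) :
    lossA (fun c : W × X => p (c.2, c.1)) CW CX = lossA p CX CW := by
  have hpos' : ∀ c : W × X, 0 < (fun c : W × X => p (c.2, c.1)) c := fun c => hpos _
  rw [lossA, lossA]
  have h1 : mutualInfoFull (fun c : W × X => p (c.2, c.1)) = mutualInfoFull p := by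
    rw [mutualInfoFull, mutualInfoFull, Finset.sum_comm]
    refine Finset.sum_congr rfl fun x _ => Finset.sum_congr rfl fun w _ => ?_
    show p (x, w) * Real.log (p (x, w) /
        (marg₁ (fun c : W × X => p (c.2, c.1)) w * marg₂ (fun c : W × X => p (c.2, c.1)) x))
      = p (x, w) * Real.log (p (x, w) / (marg₁ p x * marg₂ p w))
    rw [show marg₁ (fun c : W × X => p (c.2, c.1)) w = marg₂ p w from rfl,
      show marg₂ (fun c : W × X => p (c.2, c.1)) x = marg₁ p x from rfl,
      mul_comm (marg₂ p w) (marg₁ p x)]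
  have h2 : mutualInfoPos (coclust (fun c : W × X => p (c.2, c.1)) CW CX)
      = mutualInfoPos (coclust p CX CW) := by
    rw [mutualInfoPos_eq _ (coclust_nonneg _ hpos' CW CX),
      mutualInfoPos_eq _ (coclust_nonneg _ hpos CX CW),
      Fintype.sum_prod_type, Fintype.sum_prod_type, Finset.sum_comm]
    refine Finset.sum_congr rfl fun xs _ => Finset.sum_congr rfl fun ws _ => ?_
    show coclust (fun c : W × X => p (c.2, c.1)) CW CX (ws, xs) *
        Real.log (coclust (fun c : W × X => p (c.2, c.1)) CW CX (ws, xs) /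
          (marg₁ (coclust (fun c : W × X => p (c.2, c.1)) CW CX) ws
            * marg₂ (coclust (fun c : W × X => p (c.2, c.1)) CW CX) xs))
      = coclust p CX CW (xs, ws) * Real.log (coclust p CX CW (xs, ws) /
          (marg₁ (coclust p CX CW) xs * marg₂ (coclust p CX CW) ws))
    rw [coclust_swap p CX CW xs ws, marg₁_coclust_swap p CX CW ws,
      marg₂_coclust_swap p CX CW xs,
      mul_comm (marg₂ (coclust p CX CW) ws) (marg₁ (coclust p CX CW) xs)]
  rw [h1, h2]

end AuxLemmas


/-- Step-1 monotonicity of the co-clustering iterations: if the row updates and the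
column updates each do not increase the corresponding conditional KL divergences, then
the objective `ℓ_A` is non-increasing along iterations. -/
theorem step1_monotone {X W Xs Ws : Type*} [Fintype X] [Fintype W] [Nonempty X] [Nonempty W]
    [Fintype Xs] [Fintype Ws] [DecidableEq Xs] [DecidableEq Ws]
    (p : X × W → ℝ) (hpos : ∀ c, 0 < p c) (hsum : ∑ c, p c = 1)
    (CXs : ℕ → X → Xs) (CWs : ℕ → W → Ws)
    (ha : ∀ i : ℕ, ∀ x : X,
      KLdiv (condRow p x) (approxCondRow p (CXs i) (CWs i) (CXs (i + 1) x))
        ≤ KLdiv (condRow p x) (approxCondRow p (CXs i) (CWs i) (CXs i x)))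
    (hb : ∀ i : ℕ, ∀ w : W,
      KLdiv (condCol p w) (approxCondCol p (CXs (i + 1)) (CWs i) (CWs (i + 1) w))
        ≤ KLdiv (condCol p w) (approxCondCol p (CXs (i + 1)) (CWs i) (CWs i w))) :
    ∀ i : ℕ, lossA p (CXs (i + 1)) (CWs (i + 1)) ≤ lossA p (CXs i) (CWs i) := by
  intro i
  have step1 : lossA p (CXs (i + 1)) (CWs i) ≤ lossA p (CXs i) (CWs i) :=
    halfstep p hpos (CXs i) (CXs (i + 1)) (CWs i) (ha i)
  have hpos' : ∀ c : W × X, 0 < (fun c : W × X => p (c.2, c.1)) c := fun c => hpos _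
  have hswap : ∀ w, KLdiv (condRow (fun c : W × X => p (c.2, c.1)) w)
        (approxCondRow (fun c : W × X => p (c.2, c.1)) (CWs i) (CXs (i + 1)) (CWs (i + 1) w))
      ≤ KLdiv (condRow (fun c : W × X => p (c.2, c.1)) w)
        (approxCondRow (fun c : W × X => p (c.2, c.1)) (CWs i) (CXs (i + 1)) (CWs i w)) := by
    intro w
    rw [condRow_swap, approxCondRow_swap, approxCondRow_swap]
    exact hb i w
  have step2 := halfstep (fun c : W × X => p (c.2, c.1)) hpos'
    (CWs i) (CWs (i + 1)) (CXs (i + 1)) hswap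
  rw [lossA_swap p hpos (CXs (i + 1)) (CWs (i + 1)),
    lossA_swap p hpos (CXs (i + 1)) (CWs i)] at step2
  exact step2.trans step1
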